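/- For every goods instance with n agents there exists a fractional allocation x that is weighted proportional (v_i(x_i) ≥ w_i·v_i(M) for every agent i) and in which at most n − 1 items are fractional, i.e., the number of items e with x_i(e) > 0 for at least two agents i is at most n − 1. -/

import Mathlib

open Finset

/-- Counting lemma: an extreme point of the WPROP-type polytope (with value
constraints only for agents `j ≠ i₀`) has at most `card N - 1` fractional items. -/
lemma frac_card_le_of_extreme {N M : Type*} [Fintype N] [Fintype M]
    (v : N → M → ℝ) (i₀ : N) (c : N → ℝ) (z : N → M → ℝ)
    (hz : z ∈ Set.extremePoints ℝ
      {x : N → M → ℝ | (∀ i e, 0 ≤ x i e) ∧ (∀ e, ∑ i, x i e = 1) ∧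
        ∀ j, j ≠ i₀ → c j ≤ ∑ e, x j e * v j e}) :
    (Finset.univ.filter
        (fun e : M => 2 ≤ (Finset.univ.filter (fun i : N => 0 < z i e)).card)).card
      ≤ Fintype.card N - 1 := by
  classical
  set S : Set (N → M → ℝ) :=
    {x : N → M → ℝ | (∀ i e, 0 ≤ x i e) ∧ (∀ e, ∑ i, x i e = 1) ∧
        ∀ j, j ≠ i₀ → c j ≤ ∑ e, x j e * v j e} with hSdef
  obtain ⟨hzS, hzext⟩ := hz
  set Frac : Finset M :=
    Finset.univ.filter
      (fun e : M => 2 ≤ (Finset.univ.filter (fun i : N => 0 < z i e)).card) with hFrac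
  by_contra hbig
  push_neg at hbig
  -- choose two distinct positive agents for each fractional item
  have hab : ∀ e ∈ Frac, ∃ q : N × N, q.1 ≠ q.2 ∧ 0 < z q.1 e ∧ 0 < z q.2 e := by
    intro e he
    rw [hFrac, Finset.mem_filter] at he
    obtain ⟨a, ha, b, hb, hne⟩ := Finset.one_lt_card.mp (lt_of_lt_of_le one_lt_two he.2)
    rw [Finset.mem_filter] at ha hb
    exact ⟨(a, b), hne, ha.2, hb.2⟩
  have hFne : Frac.Nonempty := by
    rcases Finset.eq_empty_or_nonempty Frac with h | h
    · exfalso; rw [h, Finset.card_empty] at hbig; omega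
    · exact h
  obtain ⟨e₁, he₁⟩ := hFne
  obtain ⟨q₁, -, -, -⟩ := hab e₁ he₁
  haveI hNne : Nonempty N := ⟨q₁.1⟩
  choose! q hqne hqa hqb using hab
  have hcard : Fintype.card N ≤ Frac.card := by
    have := Fintype.card_pos (α := N)
    omega
  -- the linear map from fractional-item coefficients to agent-value derivatives
  set κ : {j : N // j ≠ i₀} → {e : M // e ∈ Frac} → ℝ := fun j e =>
    ((if (j : N) = (q e.1).1 then (1 : ℝ) else 0)
      - (if (j : N) = (q e.1).2 then (1 : ℝ) else 0)) * v j.1 e.1 with hκ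
  set T : ({e : M // e ∈ Frac} → ℝ) →ₗ[ℝ] ({j : N // j ≠ i₀} → ℝ) :=
    { toFun := fun γ j => ∑ e : {e : M // e ∈ Frac}, γ e * κ j e
      map_add' := by
        intro γ₁ γ₂
        funext j
        simp [add_mul, Finset.sum_add_distrib]
      map_smul' := by
        intro r γ
        funext j
        simp [Finset.mul_sum, mul_assoc] } with hT
  have hnotinj : ¬ Function.Injective T := by
    intro hinj
    have hle := LinearMap.finrank_le_finrank_of_injective hinj
    rw [Module.finrank_fintype_fun_eq_card, Module.finrank_fintype_fun_eq_card,
      Fintype.card_coe] at hle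
    have hN' : Fintype.card {j : N // j ≠ i₀} = Fintype.card N - 1 := by
      rw [Fintype.card_subtype_compl (p := fun j => j = i₀)]
      simp
    rw [hN'] at hle
    omega
  rw [Function.not_injective_iff] at hnotinj
  obtain ⟨γ₁, γ₂, hγeq, hγne⟩ := hnotinj
  set γ : {e : M // e ∈ Frac} → ℝ := γ₁ - γ₂ with hγ
  have hTγ : T γ = 0 := by rw [hγ, map_sub, hγeq, sub_self]
  have hγ0 : γ ≠ 0 := sub_ne_zero.mpr hγne
  -- the perturbation direction
  set d : N → M → ℝ := fun i e =>
    if he : e ∈ Frac then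
      γ ⟨e, he⟩ * ((if i = (q e).1 then (1 : ℝ) else 0)
        - (if i = (q e).2 then (1 : ℝ) else 0))
    else 0 with hd
  have hdsum : ∀ e, ∑ i, d i e = 0 := by
    intro e
    by_cases he : e ∈ Frac
    · have : ∀ i, d i e = γ ⟨e, he⟩ * ((if i = (q e).1 then (1 : ℝ) else 0)
        - (if i = (q e).2 then (1 : ℝ) else 0)) := fun i => by rw [hd]; simp [he]
      rw [Finset.sum_congr rfl fun i _ => this i, ← Finset.mul_sum]
      rw [Finset.sum_sub_distrib]
      simp
    · simp [hd, he]
  have hdval : ∀ j, j ≠ i₀ → ∑ e, d j e * v j e = 0 := by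
    intro j hj
    have h1 : ∑ e, d j e * v j e = ∑ e ∈ Frac, d j e * v j e := by
      refine (Finset.sum_subset (Finset.subset_univ _) ?_).symm
      intro e _ he
      rw [hd]; simp [he]
    have h2 : ∑ e ∈ Frac, d j e * v j e
        = ∑ e : {e : M // e ∈ Frac}, γ e * κ ⟨j, hj⟩ e := by
      rw [← Finset.sum_attach Frac (fun e => d j e * v j e)]
      refine Finset.sum_congr rfl ?_
      intro e _
      rw [hd, hκ]
      simp only [e.2, dif_pos]
      ring
    have h3 := congrFun hTγ ⟨j, hj⟩
    rw [hT] at h3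
    simp only [LinearMap.coe_mk, AddHom.coe_mk, Pi.zero_apply] at h3
    rw [h1, h2]
    exact h3
  have hdsupp : ∀ i e, d i e ≠ 0 → 0 < z i e := by
    intro i e hne
    by_cases he : e ∈ Frac
    · by_cases hia : i = (q e).1
      · rw [hia]; exact hqa e he
      · by_cases hib : i = (q e).2
        · rw [hib]; exact hqb e he
        · exfalso; apply hne; rw [hd]; simp [he, hia, hib]
    · exfalso; apply hne; rw [hd]; simp [he]
  -- a nonzero coordinate of d
  obtain ⟨e₀, hγe₀⟩ := Function.ne_iff.mp hγ0
  have hd0 : d (q e₀.1).1 e₀.1 ≠ 0 := by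
    have hne' := hqne e₀.1 e₀.2
    have heq : d (q e₀.1).1 e₀.1 = γ e₀ := by
      rw [hd]
      simp only [dif_pos e₀.2, if_pos rfl, if_neg hne']
      simp
    rw [heq]
    simpa using hγe₀
  -- choose a small ε
  have hMne : Nonempty M := ⟨e₁⟩
  set ε : ℝ := Finset.univ.inf' (Finset.univ_nonempty (α := N × M))
    (fun p : N × M => if d p.1 p.2 = 0 then 1 else z p.1 p.2 / |d p.1 p.2|) with hε
  have hεpos : 0 < ε := by
    rw [hε, Finset.lt_inf'_iff]
    intro p _
    by_cases hp : d p.1 p.2 = 0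
    · simp [hp]
    · rw [if_neg hp]
      exact div_pos (hdsupp _ _ hp) (abs_pos.mpr hp)
  have hεle : ∀ i e, d i e ≠ 0 → ε * |d i e| ≤ z i e := by
    intro i e hne
    have h1 : ε ≤ z i e / |d i e| := by
      have := Finset.inf'_le (f := fun p : N × M =>
        if d p.1 p.2 = 0 then 1 else z p.1 p.2 / |d p.1 p.2|)
        (b := (i, e)) (Finset.mem_univ _)
      rw [if_neg hne] at this
      exact this
    have h2 : (0 : ℝ) < |d i e| := abs_pos.mpr hne
    calc ε * |d i e| ≤ (z i e / |d i e|) * |d i e| := by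
          exact mul_le_mul_of_nonneg_right h1 (le_of_lt h2)
      _ = z i e := by field_simp
  -- the two perturbed points
  have hmem : ∀ (σ : ℝ), |σ| = 1 → (fun i e => z i e + σ * ε * d i e) ∈ S := by
    intro σ hσ
    refine ⟨?_, ?_, ?_⟩
    · intro i e
      show (0:ℝ) ≤ z i e + σ * ε * d i e
      by_cases hne : d i e = 0
      · simp [hne]; exact hzS.1 i e
      · have h1 := hεle i e hne
        have h2 : |σ * ε * d i e| = ε * |d i e| := by
          rw [abs_mul, abs_mul, hσ, abs_of_pos hεpos]; ring
        have h3 : -(σ * ε * d i e) ≤ ε * |d i e| := by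
          rw [← h2]; exact neg_le_abs _
        linarith
    · intro e
      rw [Finset.sum_add_distrib, ← Finset.mul_sum, hdsum e, mul_zero, add_zero]
      exact hzS.2.1 e
    · intro j hj
      have : ∀ e, (z j e + σ * ε * d j e) * v j e
          = z j e * v j e + (σ * ε) * (d j e * v j e) := fun e => by ring
      rw [Finset.sum_congr rfl fun e _ => this e, Finset.sum_add_distrib,
        ← Finset.mul_sum, hdval j hj, mul_zero, add_zero]
      exact hzS.2.2 j hj
  have hy₁ : (fun i e => z i e + 1 * ε * d i e) ∈ S := hmem 1 (by norm_num)
  have hy₂ : (fun i e => z i e + (-1) * ε * d i e) ∈ S := hmem (-1) (by norm_num)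
  have hseg : z ∈ openSegment ℝ (fun i e => z i e + 1 * ε * d i e)
      (fun i e => z i e + (-1) * ε * d i e) := by
    refine ⟨1/2, 1/2, by norm_num, by norm_num, by norm_num, ?_⟩
    funext i e
    simp only [Pi.add_apply, Pi.smul_apply, smul_eq_mul]
    ring
  have := hzext hy₁ hy₂ hseg
  have hcontra := congrFun (congrFun this (q e₀.1).1) e₀.1
  simp only [one_mul] at hcontra
  have : ε * d (q e₀.1).1 e₀.1 = 0 := by linarith [hcontra]
  exact hd0 (by
    rcases mul_eq_zero.mp this with h | h
    · exact absurd h (ne_of_gt hεpos)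
    · exact h)

/-- For every goods instance there exists a fractional weighted-proportional allocation
in which at most `n - 1` items are fractional (shared by at least two agents). -/
theorem goods_fractional_WPROP_exists
    {N M : Type*} [Fintype N] [Fintype M]
    (w : N → ℝ) (v : N → M → ℝ)
    (hwpos : ∀ i, 0 < w i) (hwsum : ∑ i, w i = 1)
    (hv0 : ∀ i e, 0 ≤ v i e) (hv1 : ∀ i e, v i e ≤ 1) :
    ∃ x : N → M → ℝ,
      (∀ i e, 0 ≤ x i e) ∧ (∀ i e, x i e ≤ 1) ∧
      (∀ e, ∑ i, x i e = 1) ∧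
      (∀ i, w i * ∑ e, v i e ≤ ∑ e, x i e * v i e) ∧
      (Finset.univ.filter
          (fun e : M => 2 ≤ (Finset.univ.filter (fun i : N => 0 < x i e)).card)).card
        ≤ Fintype.card N - 1 := by
  classical
  have hNne : Nonempty N := by
    by_contra h
    rw [not_nonempty_iff] at h
    rw [Finset.univ_eq_empty, Finset.sum_empty] at hwsum
    norm_num at hwsum
  obtain ⟨i₀⟩ := hNne
  set S : Set (N → M → ℝ) :=
    {x : N → M → ℝ | (∀ i e, 0 ≤ x i e) ∧ (∀ e, ∑ i, x i e = 1) ∧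
        ∀ j, j ≠ i₀ → (w j * ∑ e, v j e) ≤ ∑ e, x j e * v j e} with hSdef
  have heval : ∀ (i : N) (e : M), Continuous fun x : N → M → ℝ => x i e :=
    fun i e => (continuous_apply e).comp (continuous_apply i)
  -- S is closed
  have hSclosed : IsClosed S := by
    have h1 : IsClosed {x : N → M → ℝ | ∀ i e, 0 ≤ x i e} := by
      have : {x : N → M → ℝ | ∀ i e, 0 ≤ x i e}
          = ⋂ i, ⋂ e, {x : N → M → ℝ | 0 ≤ x i e} := by
        ext x; simp [Set.mem_iInter]
      rw [this]
      exact isClosed_iInter fun i => isClosed_iInter fun e =>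
        isClosed_le continuous_const (heval i e)
    have h2 : IsClosed {x : N → M → ℝ | ∀ e, ∑ i, x i e = 1} := by
      have : {x : N → M → ℝ | ∀ e, ∑ i, x i e = 1}
          = ⋂ e, {x : N → M → ℝ | ∑ i, x i e = 1} := by
        ext x; simp [Set.mem_iInter]
      rw [this]
      exact isClosed_iInter fun e =>
        isClosed_eq (continuous_finset_sum _ fun i _ => heval i e) continuous_const
    have h3 : IsClosed {x : N → M → ℝ | ∀ j, j ≠ i₀ →
        (w j * ∑ e, v j e) ≤ ∑ e, x j e * v j e} := by
      have : {x : N → M → ℝ | ∀ j, j ≠ i₀ →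
          (w j * ∑ e, v j e) ≤ ∑ e, x j e * v j e}
          = ⋂ j, ⋂ (_ : j ≠ i₀),
            {x : N → M → ℝ | (w j * ∑ e, v j e) ≤ ∑ e, x j e * v j e} := by
        ext x; simp [Set.mem_iInter]
      rw [this]
      exact isClosed_iInter fun j => isClosed_iInter fun _ =>
        isClosed_le continuous_const
          (continuous_finset_sum _ fun e _ => (heval j e).mul continuous_const)
    have : S = {x : N → M → ℝ | ∀ i e, 0 ≤ x i e}
        ∩ ({x : N → M → ℝ | ∀ e, ∑ i, x i e = 1}
          ∩ {x : N → M → ℝ | ∀ j, j ≠ i₀ →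
              (w j * ∑ e, v j e) ≤ ∑ e, x j e * v j e}) := by
      ext x
      simp only [hSdef, Set.mem_setOf_eq, Set.mem_inter_iff]
    rw [this]
    exact h1.inter (h2.inter h3)
  -- S is contained in a compact box
  have hsub : S ⊆ Set.Icc (0 : N → M → ℝ) 1 := by
    intro x hx
    constructor
    · intro i
      intro e
      exact hx.1 i e
    · intro i
      intro e
      have h1 : x i e ≤ ∑ i', x i' e :=
        Finset.single_le_sum (fun j _ => hx.1 j e) (Finset.mem_univ i)
      rw [hx.2.1 e] at h1
      exact h1
  have hScomp : IsCompact S :=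
    IsCompact.of_isClosed_subset isCompact_Icc hSclosed hsub
  -- S is nonempty
  have hS0 : ((fun i _ => w i) : N → M → ℝ) ∈ S := by
    refine ⟨fun i e => (hwpos i).le, fun e => hwsum, fun j _ => ?_⟩
    rw [← Finset.mul_sum]
  have hSne : S.Nonempty := ⟨_, hS0⟩
  -- the objective functional
  set l : (N → M → ℝ) →L[ℝ] ℝ :=
    ∑ e : M, v i₀ e • ((ContinuousLinearMap.proj e).comp
      (ContinuousLinearMap.proj (R := ℝ) (φ := fun _ : N => M → ℝ) i₀)) with hl
  have hlval : ∀ x : N → M → ℝ, l x = ∑ e, x i₀ e * v i₀ e := by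
    intro x
    rw [hl]
    simp [ContinuousLinearMap.sum_apply, mul_comm]
  obtain ⟨z₀, hz₀S, hz₀max⟩ := hScomp.exists_isMaxOn hSne l.continuous.continuousOn
  set F : Set (N → M → ℝ) := {x ∈ S | ∀ y ∈ S, l y ≤ l x} with hF
  have hFexp : IsExposed ℝ S F := fun _ => ⟨l, rfl⟩
  have hz₀F : z₀ ∈ F := ⟨hz₀S, fun y hy => hz₀max hy⟩
  have hFcomp : IsCompact F :=
    IsCompact.of_isClosed_subset hScomp (hFexp.isClosed hSclosed) fun x hx => hx.1
  obtain ⟨z, hzF⟩ := hFcomp.extremePoints_nonempty ⟨z₀, hz₀F⟩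
  have hzS : z ∈ Set.extremePoints ℝ S :=
    hFexp.isExtreme.extremePoints_subset_extremePoints hzF
  have hzmem : z ∈ S := hzS.1
  have hzmax : ∀ y ∈ S, l y ≤ l z := (hzF.1 : z ∈ F).2
  refine ⟨z, hzmem.1, ?_, hzmem.2.1, ?_, ?_⟩
  · intro i e
    have h1 : z i e ≤ ∑ i', z i' e :=
      Finset.single_le_sum (fun j _ => hzmem.1 j e) (Finset.mem_univ i)
    rw [hzmem.2.1 e] at h1
    exact h1
  · intro i
    by_cases hi : i = i₀
    · subst hi
      have h1 := hzmax _ hS0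
      rw [hlval, hlval] at h1
      calc w i * ∑ e, v i e = ∑ e, w i * v i e := by rw [Finset.mul_sum]
        _ ≤ ∑ e, z i e * v i e := h1
    · exact hzmem.2.2 i hi
  · exact frac_card_le_of_extreme v i₀ (fun j => w j * ∑ e, v j e) z hzS
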